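/- Let 1 ≤ p < ∞ and c ∈ ℝ. Then for every x ∈ (0,1), the function w ↦ w^{−p(1+c)} (1−w)^{−p(1−c)} x^{p(1+c)} (1−x)^{p(1−c)} does not belong to L¹(0,1). -/

import Mathlib

open Set MeasureTheory

private lemma half_aux (a : ℝ) :
    ∀ w ∈ Ioo (1/2 : ℝ) 1, min ((1/2:ℝ) ^ a) 1 ≤ w ^ a := by
  intro w hw
  rcases le_or_gt 0 a with ha | ha
  · refine le_trans (min_le_left _ _) ?_
    exact Real.rpow_le_rpow (by norm_num) hw.1.le ha
  · refine le_trans (min_le_right _ _) ?_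
    have : w ^ a ≥ (1:ℝ) ^ a := Real.rpow_le_rpow_of_nonpos (by linarith [hw.1]) hw.2.le ha.le
    simpa using this

private lemma min_pos (a : ℝ) : 0 < min ((1/2:ℝ) ^ a) 1 :=
  lt_min (Real.rpow_pos_of_pos (by norm_num) _) one_pos

/-- For `1 ≤ p < ∞`, `c ∈ ℝ`, and any `x ∈ (0,1)`, the function
`w ↦ w^{−p(1+c)} (1−w)^{−p(1−c)} x^{p(1+c)} (1−x)^{p(1−c)}` is not in `L¹(0,1)`. -/
theorem logistic_weight_not_integrable (p : ℝ) (hp : 1 ≤ p) (c : ℝ)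
    (x : ℝ) (hx : x ∈ Ioo (0:ℝ) 1) :
    ¬ IntegrableOn
        (fun w => w ^ (-(p * (1 + c))) * (1 - w) ^ (-(p * (1 - c))) *
          x ^ (p * (1 + c)) * (1 - x) ^ (p * (1 - c)))
        (Ioo (0:ℝ) 1) volume := by
  obtain ⟨hx0, hx1⟩ := hx
  intro h
  set a : ℝ := -(p * (1 + c)) with ha_def
  set b : ℝ := -(p * (1 - c)) with hb_def
  have hX : (0:ℝ) < x ^ (p * (1 + c)) := Real.rpow_pos_of_pos hx0 _
  have hY : (0:ℝ) < (1 - x) ^ (p * (1 - c)) := Real.rpow_pos_of_pos (by linarith) _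
  -- remove the constant factor
  have hg : IntegrableOn (fun w => w ^ a * (1 - w) ^ b) (Ioo (0:ℝ) 1) volume := by
    have h2 : IntegrableOn
        (fun w => w ^ a * (1 - w) ^ b * x ^ (p * (1 + c)) * (1 - x) ^ (p * (1 - c)) *
          (x ^ (p * (1 + c)) * (1 - x) ^ (p * (1 - c)))⁻¹) (Ioo (0:ℝ) 1) volume :=
      h.mul_const ((x ^ (p * (1 + c)) * (1 - x) ^ (p * (1 - c)))⁻¹)
    refine h2.congr_fun ?_ measurableSet_Ioo
    intro w _
    have hXY : x ^ (p * (1 + c)) * (1 - x) ^ (p * (1 - c)) ≠ 0 := by positivity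
    field_simp
  have hmeas_a : AEStronglyMeasurable (fun w : ℝ => w ^ a)
      (volume.restrict (Ioo (0:ℝ) (1/2))) :=
    (ContinuousOn.rpow_const continuousOn_id
      (fun w hw => Or.inl (ne_of_gt hw.1))).aestronglyMeasurable measurableSet_Ioo
  have hmeas_b : AEStronglyMeasurable (fun w : ℝ => (1 - w) ^ b)
      (volume.restrict (Ioo (1/2:ℝ) 1)) :=
    (ContinuousOn.rpow_const (continuous_const.sub continuous_id).continuousOn
      (fun w hw => Or.inl (by intro h0; simp only [Pi.sub_apply, id_eq, sub_eq_zero] at h0; linarith [hw.2]))).aestronglyMeasurable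
      measurableSet_Ioo
  -- integrability of w^a near 0
  have hIa : IntegrableOn (fun w : ℝ => w ^ a) (Ioo (0:ℝ) (1/2)) volume := by
    set m := min ((1/2:ℝ) ^ b) 1 with hm_def
    have hm : 0 < m := min_pos b
    have hg' : IntegrableOn (fun w => m⁻¹ * (w ^ a * (1 - w) ^ b)) (Ioo (0:ℝ) (1/2)) volume :=
      (hg.mono_set (Ioo_subset_Ioo le_rfl (by norm_num))).const_mul _
    refine hg'.mono' hmeas_a ?_
    rw [MeasureTheory.ae_restrict_iff' measurableSet_Ioo]
    filter_upwards with w hw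
    have hwa : (0:ℝ) < w ^ a := Real.rpow_pos_of_pos hw.1 _
    have h1w : (1 - w) ∈ Ioo (1/2:ℝ) 1 := ⟨by linarith [hw.2], by linarith [hw.1]⟩
    have hb' : m ≤ (1 - w) ^ b := half_aux b _ h1w
    rw [Real.norm_eq_abs, abs_of_pos hwa, ← mul_le_mul_iff_right₀ hm]
    calc m * w ^ a ≤ (1 - w) ^ b * w ^ a := by
          exact mul_le_mul_of_nonneg_right hb' hwa.le
      _ = m * (m⁻¹ * (w ^ a * (1 - w) ^ b)) := by
          field_simp
  -- integrability of (1-w)^b near 1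
  have hIb : IntegrableOn (fun w : ℝ => (1 - w) ^ b) (Ioo (1/2:ℝ) 1) volume := by
    set m := min ((1/2:ℝ) ^ a) 1 with hm_def
    have hm : 0 < m := min_pos a
    have hg' : IntegrableOn (fun w => m⁻¹ * (w ^ a * (1 - w) ^ b)) (Ioo (1/2:ℝ) 1) volume :=
      (hg.mono_set (Ioo_subset_Ioo (by norm_num) le_rfl)).const_mul _
    refine hg'.mono' hmeas_b ?_
    rw [MeasureTheory.ae_restrict_iff' measurableSet_Ioo]
    filter_upwards with w hw
    have hwb : (0:ℝ) < (1 - w) ^ b := Real.rpow_pos_of_pos (by linarith [hw.2]) _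
    have ha' : m ≤ w ^ a := half_aux a _ hw
    rw [Real.norm_eq_abs, abs_of_pos hwb, ← mul_le_mul_iff_right₀ hm]
    calc m * (1 - w) ^ b ≤ w ^ a * (1 - w) ^ b := by
          exact mul_le_mul_of_nonneg_right ha' hwb.le
      _ = m * (m⁻¹ * (w ^ a * (1 - w) ^ b)) := by
          field_simp
  -- reflect to get w^b near 0
  have hIb' : IntegrableOn (fun w : ℝ => w ^ b) (Ioo (0:ℝ) (1/2)) volume := by
    have h1 : IntervalIntegrable (fun w : ℝ => (1 - w) ^ b) volume (1/2) 1 := by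
      rwa [intervalIntegrable_iff_integrableOn_Ioo_of_le (by norm_num)]
    have h2 := h1.comp_sub_left 1
    simp only [sub_sub_cancel] at h2
    norm_num at h2
    have h3 := h2.symm
    rwa [intervalIntegrable_iff_integrableOn_Ioo_of_le (by norm_num)] at h3
  have hga : -1 < a := (intervalIntegral.integrableOn_Ioo_rpow_iff (by norm_num)).1 hIa
  have hgb : -1 < b := (intervalIntegral.integrableOn_Ioo_rpow_iff (by norm_num)).1 hIb'
  have : a + b = -(2 * p) := by rw [ha_def, hb_def]; ring
  linarith
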